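/- For every n ≥ 3, the set partition word p = (a_1 a_2 ⋯ a_n)^2 (the concatenation of two copies of a word with n distinct letters) is not sorted after n−1 applications of φ_{aba}; that is, φ_{aba}^{n−1}(p) is not sorted. -/

import Mathlib

/-- West's stack-sorting map, implemented with an explicit stack (top = head). -/
def sWestAux : List ℕ → List ℕ → List ℕ
  | [], st => st
  | x :: xs, [] => sWestAux xs [x]
  | x :: xs, t :: st =>
      if t < x then t :: sWestAux (x :: xs) st
      else sWestAux xs (x :: t :: st)
termination_by l st => 2 * l.length + st.length

def sWest (l : List ℕ) : List ℕ := sWestAux l []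

/-- A word contains a subsequence equivalent to `aba`. -/
def HasABA (l : List ℕ) : Prop :=
  ∃ i j k : Fin l.length, i < j ∧ j < k ∧ l.get i = l.get k ∧ l.get j ≠ l.get i

instance (l : List ℕ) : Decidable (HasABA l) := by
  unfold HasABA; infer_instance

/-- Xia's stack-sorting map φ_{aba}, with explicit stack (top = head). -/
def phiAux : List ℕ → List ℕ → List ℕ
  | [], st => st
  | x :: xs, [] => phiAux xs [x]
  | x :: xs, t :: st =>
      if HasABA (x :: t :: st) then t :: phiAux (x :: xs) st
      else phiAux xs (x :: t :: st)
termination_by l st => 2 * l.length + st.length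

def phi (p : List ℕ) : List ℕ := phiAux p []

/-- A set partition word is sorted: all occurrences of each letter are consecutive. -/
def SortedWord (p : List ℕ) : Prop :=
  ∀ i j k : Fin p.length, i < j → j < k → p.get i = p.get k → p.get j = p.get i

/-- Number of distinct letters. -/
def Nletters (p : List ℕ) : ℕ := p.toFinset.card

def Avoids231 (l : List ℕ) : Prop :=
  ¬ ∃ i j k : Fin l.length, i < j ∧ j < k ∧ l.get k < l.get i ∧ l.get i < l.get j

/-! ### Auxiliary lemmas -/

lemma hasABA_of_sublist {a b : ℕ} {l : List ℕ} (hab : a ≠ b) (h : List.Sublist [a, b, a] l) :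
    HasABA l := by
  obtain ⟨is, his, hp⟩ := List.sublist_eq_map_getElem h
  match is, his with
  | [i, j, k], his =>
    simp [List.map] at his
    obtain ⟨h1, h2, h3⟩ := his
    simp [List.pairwise_cons] at hp
    refine ⟨i, j, k, hp.1.1, hp.2, ?_, ?_⟩
    · simp only [List.get_eq_getElem]; rw [← h1, ← h3]
    · simp only [List.get_eq_getElem]; rw [← h1, ← h2]; exact fun hc => hab hc.symm
  | [_], his => simp at his
  | [], his => simp at his
  | [_,_], his => simp at his
  | _::_::_::_::_, his => simp at his

lemma sub3 {l : List ℕ} {i j k : Fin l.length} (hij : i < j) (hjk : j < k) :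
    List.Sublist [l.get i, l.get j, l.get k] l := by
  have := List.map_getElem_sublist (l := l) (is := [i, j, k])
    (by simp [List.pairwise_cons]; exact ⟨⟨hij, hij.trans hjk⟩, hjk⟩)
  simpa using this

lemma hasABA_sublist {l l' : List ℕ} (h : List.Sublist l' l) (h' : HasABA l') : HasABA l := by
  obtain ⟨i, j, k, hij, hjk, hik, hne⟩ := h'
  refine hasABA_of_sublist (a := l'.get i) (b := l'.get j) (fun hc => hne hc.symm) ?_
  have h3 := sub3 hij hjk
  nth_rewrite 2 [hik]
  exact h3.trans h

lemma not_hasABA_intro {l : List ℕ} (h : ∀ a b : ℕ, a ≠ b → ¬ (List.Sublist [a, b, a] l)) :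
    ¬ HasABA l := by
  rintro ⟨i, j, k, hij, hjk, hik, hne⟩
  refine h (l.get i) (l.get j) (fun hc => hne hc.symm) ?_
  have h3 := sub3 hij hjk
  nth_rewrite 2 [hik]
  exact h3

lemma not_sortedWord_of_hasABA {l : List ℕ} (h : HasABA l) : ¬ SortedWord l := by
  obtain ⟨i, j, k, hij, hjk, hik, hne⟩ := h
  exact fun hs => hne (hs i j k hij hjk hik)

lemma not_hasABA_of_nodup {l : List ℕ} (h : l.Nodup) : ¬ HasABA l := by
  refine not_hasABA_intro fun a b hab hs => ?_
  have hc := hs.count_le a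
  simp [List.count_cons, hab.symm] at hc
  have := List.nodup_iff_count_le_one.mp h a
  omega

lemma not_hasABA_append {a b : List ℕ} (ha : ¬ HasABA a) (hb : ¬ HasABA b)
    (hd : ∀ x ∈ a, x ∉ b) : ¬ HasABA (a ++ b) := by
  refine not_hasABA_intro fun p q hpq hs => ?_
  rw [List.sublist_append_iff] at hs
  obtain ⟨s, t, hst, hsa, htb⟩ := hs
  rcases s with _ | ⟨x1, _ | ⟨x2, _ | ⟨x3, s⟩⟩⟩
  · simp at hst
    subst hst
    exact hb (hasABA_of_sublist hpq htb)
  · simp at hst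
    obtain ⟨h1, h2⟩ := hst
    subst h1; subst h2
    exact hd p (List.singleton_sublist.mp hsa) (htb.subset (by simp))
  · simp at hst
    obtain ⟨h1, h2, h3⟩ := hst
    subst h1; subst h2; subst h3
    exact hd p (hsa.subset (by simp)) (htb.subset (by simp))
  · simp at hst
    obtain ⟨h1, h2, h3, h4, h5⟩ := hst
    subst h1; subst h2; subst h3; subst h4; subst h5
    exact ha (hasABA_of_sublist hpq (by simpa using hsa))

def pairWord (cs : List ℕ) : List ℕ := cs.flatMap fun c => [c, c]

@[simp] lemma pairWord_nil : pairWord [] = [] := rfl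
@[simp] lemma pairWord_cons (c : ℕ) (cs : List ℕ) :
    pairWord (c :: cs) = c :: c :: pairWord cs := rfl
@[simp] lemma mem_pairWord {x : ℕ} {cs : List ℕ} : x ∈ pairWord cs ↔ x ∈ cs := by
  simp [pairWord]
@[simp] lemma pairWord_append (a b : List ℕ) :
    pairWord (a ++ b) = pairWord a ++ pairWord b := by simp [pairWord]
@[simp] lemma pairWord_reverse (cs : List ℕ) :
    (pairWord cs).reverse = pairWord cs.reverse := by
  induction cs with
  | nil => rfl
  | cons c cs ih =>
    rw [pairWord_cons]
    simp [ih]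

lemma not_hasABA_pairWord {cs : List ℕ} (h : cs.Nodup) : ¬ HasABA (pairWord cs) := by
  induction cs with
  | nil => exact not_hasABA_of_nodup (by simp)
  | cons c cs ih =>
    rw [pairWord_cons, show c :: c :: pairWord cs = [c, c] ++ pairWord cs from rfl]
    rcases List.nodup_cons.mp h with ⟨hc, hcs⟩
    exact not_hasABA_append
      (not_hasABA_intro (by rintro a b hab hs; have := hs.length_le; simp at this))
      (ih hcs) (by simpa using hc)

@[simp] lemma phiAux_nil (st : List ℕ) : phiAux [] st = st := by rw [phiAux]

lemma push_one {x : ℕ} {st : List ℕ} (h : ¬ HasABA (x :: st)) (xs : List ℕ) :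
    phiAux (x :: xs) st = phiAux xs (x :: st) := by
  cases st with
  | nil => rw [phiAux]
  | cons t s => rw [phiAux, if_neg h]

lemma pop_one {x t : ℕ} {st : List ℕ} (h : HasABA (x :: t :: st)) (xs : List ℕ) :
    phiAux (x :: xs) (t :: st) = t :: phiAux (x :: xs) st := by
  rw [phiAux, if_pos h]

lemma pushRun : ∀ (l : List ℕ) (rest st : List ℕ), ¬ HasABA (l.reverse ++ st) →
    phiAux (l ++ rest) st = phiAux rest (l.reverse ++ st) := by
  intro l
  induction l with
  | nil => intro rest st _; simp
  | cons x l ih =>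
    intro rest st h
    have hx : ¬ HasABA (x :: st) := fun hc => h (hasABA_sublist (by
      simp only [List.reverse_cons, List.append_assoc, List.singleton_append]
      exact List.sublist_append_right _ _) hc)
    rw [List.cons_append, push_one hx, ih rest (x :: st) (by
      simpa [List.append_assoc] using h)]
    simp

lemma popRun (x : ℕ) (xs : List ℕ) :
    ∀ (d st : List ℕ), (∀ y e, List.IsSuffix (y :: e) d → HasABA (x :: y :: (e ++ st))) →
      phiAux (x :: xs) (d ++ st) = d ++ phiAux (x :: xs) st := by
  intro d
  induction d with
  | nil => simp
  | cons t d ih =>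
    intro st h
    have h1 : HasABA (x :: t :: (d ++ st)) := h t d (List.suffix_refl _)
    rw [List.cons_append, pop_one h1,
      ih st (fun y e hs => h y e (hs.trans (List.suffix_cons t d)))]
    simp

lemma hasABA_xyx {x y : ℕ} (hxy : y ≠ x) (l r : List ℕ) :
    HasABA (x :: y :: (l ++ x :: r)) := by
  refine hasABA_of_sublist (Ne.symm hxy) ?_
  refine List.Sublist.cons₂ _ (List.Sublist.cons₂ _ ?_)
  exact List.singleton_sublist.mpr (by simp)

lemma step (cT cM cS tu : List ℕ) (x : ℕ)
    (hnd : (cT ++ (x :: tu) ++ cM ++ cS).Nodup) :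
    phi (pairWord cT ++ (x :: tu) ++ pairWord cM ++ (x :: tu) ++ pairWord cS)
      = pairWord cM.reverse ++ tu.reverse ++ pairWord cS.reverse ++ tu.reverse
          ++ pairWord (x :: cT.reverse) := by
  simp only [List.nodup_append, List.nodup_cons, List.disjoint_left, List.mem_append,
    List.mem_cons] at hnd
  obtain ⟨⟨⟨hTnd, ⟨hxtu, htund⟩, hTx⟩, hMnd, hM⟩, hSnd, hS⟩ := hnd
  have hTx : ∀ {a}, a ∈ cT → a = x ∨ a ∈ tu → False := fun ha hb => hTx _ ha _ hb rfl
  have hM : ∀ {a}, a ∈ cT ∨ a = x ∨ a ∈ tu → a ∈ cM → False := fun ha hb => hM _ ha _ hb rfl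
  have hS : ∀ {a}, (a ∈ cT ∨ a = x ∨ a ∈ tu) ∨ a ∈ cM → a ∈ cS → False :=
    fun ha hb => hS _ ha _ hb rfl
  have hA : ¬ HasABA ((pairWord cT ++ ((x :: tu) ++ pairWord cM)).reverse ++ ([] : List ℕ)) := by
    have e : (pairWord cT ++ ((x :: tu) ++ pairWord cM)).reverse ++ ([] : List ℕ)
        = pairWord cM.reverse ++ ((tu.reverse ++ [x]) ++ pairWord cT.reverse) := by simp
    rw [e]
    refine not_hasABA_append (not_hasABA_pairWord (by simpa using hMnd)) ?_ ?_
    · refine not_hasABA_append (not_hasABA_of_nodup ?_) (not_hasABA_pairWord (by simpa using hTnd)) ?_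
      · rw [← List.reverse_cons, List.nodup_reverse]
        exact List.nodup_cons.mpr ⟨hxtu, htund⟩
      · intro z hz
        simp only [List.mem_append, List.mem_reverse, List.mem_singleton] at hz
        simp only [mem_pairWord, List.mem_reverse]
        intro hzT
        rcases hz with hz | hz
        · exact hTx hzT (Or.inr hz)
        · exact hTx hzT (Or.inl hz)
    · intro z hz
      simp only [mem_pairWord, List.mem_reverse] at hz
      simp only [List.mem_append, List.mem_reverse, List.mem_singleton, mem_pairWord]
      push_neg
      refine ⟨⟨fun hztu => hM (Or.inr (Or.inr hztu)) hz, fun hzx => hM (Or.inr (Or.inl hzx)) hz⟩,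
        fun hzT => hM (Or.inl hzT) hz⟩
  have hpop : ∀ y e, List.IsSuffix (y :: e) (pairWord cM.reverse ++ tu.reverse) →
      HasABA (x :: y :: (e ++ (x :: pairWord cT.reverse))) := by
    intro y e hs
    have hy : y ∈ cM ∨ y ∈ tu := by
      have := hs.subset List.mem_cons_self
      simp only [List.mem_append, mem_pairWord, List.mem_reverse] at this
      exact this
    have hyx : y ≠ x := by
      rintro rfl
      rcases hy with hy | hy
      · exact hM (Or.inr (Or.inl rfl)) hy
      · exact hxtu hy
    exact hasABA_xyx hyx e _
  have hB : ¬ HasABA ((x :: (tu ++ pairWord cS)).reverse ++ (x :: pairWord cT.reverse)) := by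
    have e : (x :: (tu ++ pairWord cS)).reverse ++ (x :: pairWord cT.reverse)
        = pairWord cS.reverse ++ (tu.reverse ++ pairWord (x :: cT.reverse)) := by simp
    rw [e]
    refine not_hasABA_append (not_hasABA_pairWord (by simpa using hSnd)) ?_ ?_
    · refine not_hasABA_append (not_hasABA_of_nodup (by simpa using htund))
        (not_hasABA_pairWord ?_) ?_
      · refine List.nodup_cons.mpr ⟨?_, by simpa using hTnd⟩
        simp only [List.mem_reverse]
        intro hxT
        exact hTx hxT (Or.inl rfl)
      · intro z hz
        simp only [List.mem_reverse] at hz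
        simp only [mem_pairWord, List.mem_cons, List.mem_reverse]
        push_neg
        exact ⟨fun hzx => hxtu (hzx ▸ hz), fun hzT => hTx hzT (Or.inr hz)⟩
    · intro z hz
      simp only [mem_pairWord, List.mem_reverse] at hz
      simp only [List.mem_append, List.mem_reverse, mem_pairWord, List.mem_cons]
      push_neg
      refine ⟨fun hztu => hS (Or.inl (Or.inr (Or.inr hztu))) hz, ?_,
        fun hzT => hS (Or.inl (Or.inl hzT)) hz⟩
      · intro hzx
        exact hS (Or.inl (Or.inr (Or.inl hzx))) hz
  have e1 : pairWord cT ++ x :: tu ++ pairWord cM ++ x :: tu ++ pairWord cS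
      = (pairWord cT ++ ((x :: tu) ++ pairWord cM)) ++ ((x :: tu) ++ pairWord cS) := by simp
  rw [phi, e1, pushRun _ _ _ hA]
  have e2 : (pairWord cT ++ ((x :: tu) ++ pairWord cM)).reverse ++ ([] : List ℕ)
      = (pairWord cM.reverse ++ tu.reverse) ++ (x :: pairWord cT.reverse) := by simp
  rw [e2]
  have e3 : (x :: tu) ++ pairWord cS = x :: (tu ++ pairWord cS) := rfl
  rw [e3, popRun x _ _ _ hpop]
  have e4 : (x :: (tu ++ pairWord cS)) = (x :: (tu ++ pairWord cS)) ++ [] := by simp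
  rw [e4, pushRun _ _ _ hB, phiAux_nil]
  simp [List.append_assoc]

/-- For n ≥ 3, (a₁⋯aₙ)² is not sorted after n-1 applications of φ_{aba}. -/
theorem stmt7 (n : ℕ) (hn : 3 ≤ n) (w : List ℕ) (hw : w.Nodup) (hl : w.length = n) :
    ¬ SortedWord (phi^[n - 1] (w ++ w)) := by
  obtain ⟨x, tu, rfl⟩ : ∃ x tu, w = x :: tu := by
    cases w with
    | nil => simp at hl; omega
    | cons a l => exact ⟨a, l, rfl⟩
  have key : ∀ k, 1 ≤ k → k ≤ n - 1 → ∃ cT u cM cS : List ℕ,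
      phi^[k] ((x :: tu) ++ (x :: tu))
        = pairWord cT ++ u ++ pairWord cM ++ u ++ pairWord cS ∧
      u.length = n - k ∧ (cT ++ u ++ cM ++ cS).Nodup ∧ cS ≠ [] ∧ (2 ≤ k → cM ≠ []) := by
    intro k hk
    induction k, hk using Nat.le_induction with
    | base =>
      intro _
      refine ⟨[], tu.reverse, [], [x], ?_, ?_, ?_, by simp, by omega⟩
      · have hstep := step [] [] [] tu x (by simpa using hw)
        simp only [pairWord_nil, List.nil_append, List.append_nil, List.reverse_nil] at hstep ⊢
        rw [Function.iterate_one, hstep]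
      · simp only [List.length_reverse]
        simp only [List.length_cons] at hl
        omega
      · simp only [List.nil_append, List.append_nil]
        rw [← List.reverse_cons, List.nodup_reverse]
        exact hw
    | succ k hk ih =>
      intro hkn
      obtain ⟨cT, u, cM, cS, hEq, hulen, hnd, hSne, hMne⟩ := ih (by omega)
      obtain ⟨y, tu', rfl⟩ : ∃ y tu', u = y :: tu' := by
        cases u with
        | nil => simp at hulen; omega
        | cons a l => exact ⟨a, l, rfl⟩
      refine ⟨cM.reverse, tu'.reverse, cS.reverse, y :: cT.reverse, ?_, ?_, ?_, by simp, ?_⟩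
      · rw [Function.iterate_succ_apply', hEq, step cT cM cS tu' y hnd]
      · simp only [List.length_reverse]
        simp only [List.length_cons] at hulen
        omega
      · refine (List.perm_iff_count.mpr fun a => ?_).nodup hnd
        simp only [List.count_append, List.count_reverse, List.count_cons]
        ring
      · intro _
        simp only [ne_eq, List.reverse_eq_nil_iff]
        exact hSne
  obtain ⟨cT, u, cM, cS, hEq, hulen, hnd, hSne, hMne⟩ := key (n - 1) (by omega) le_rfl
  obtain ⟨m, cM', rfl⟩ : ∃ m cM', cM = m :: cM' := by
    rcases cM with _ | ⟨a, l⟩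
    · exact absurd rfl (hMne (by omega))
    · exact ⟨a, l, rfl⟩
  obtain ⟨z, rfl⟩ : ∃ z, u = [z] := by
    have : u.length = 1 := by omega
    rcases u with _ | ⟨a, _ | ⟨b, l⟩⟩ <;> simp at this
    exact ⟨a, rfl⟩
  have hzm : z ≠ m := by
    have hsub : List.Sublist [z, m] (cT ++ [z] ++ (m :: cM') ++ cS) := by
      have h1 : List.Sublist [z, m] ([z] ++ ((m :: cM') ++ cS)) :=
        List.Sublist.cons₂ _ (List.singleton_sublist.mpr (by simp))
      have e : cT ++ [z] ++ (m :: cM') ++ cS = cT ++ ([z] ++ ((m :: cM') ++ cS)) := by simp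
      rw [e]
      exact h1.trans (List.sublist_append_right cT _)
    have := hnd.sublist hsub
    simp only [List.nodup_cons, List.mem_singleton, List.mem_cons] at this
    exact fun h => this.1 (by simp [h])
  rw [hEq]
  refine not_sortedWord_of_hasABA (hasABA_of_sublist hzm ?_)
  have e : pairWord cT ++ [z] ++ pairWord (m :: cM') ++ [z] ++ pairWord cS
      = pairWord cT ++ (z :: (m :: m :: pairWord cM' ++ (z :: pairWord cS))) := by
    simp
  rw [e]
  refine List.Sublist.trans ?_ (List.sublist_append_right (pairWord cT) _)
  refine List.Sublist.cons₂ _ ?_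
  refine List.Sublist.cons₂ _ ?_
  exact List.singleton_sublist.mpr (by simp)
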